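/- Let l ≥ 1 be an integer, let S be a finite set with |S| = n ≥ 2, and let F be a family of subsets of S with |F| = 2l − 1. If F shatters every 2-element subset of S, then n < binom(2l−1, l−1). -/

import Mathlib

/-- If `l ≥ 1`, `|S| = n ≥ 2` and `F` is a family of subsets of `S` with `|F| = 2l - 1`
shattering every 2-element subset of `S`, then `n < binom(2l-1, l-1)`. -/
theorem lt_choose_of_shatters_pairs_odd {α : Type*} [Fintype α] [DecidableEq α]
    (l n : ℕ) (hl : 1 ≤ l) (hn : 2 ≤ n) (hcard : Fintype.card α = n)
    (F : Finset (Finset α)) (hFcard : F.card = 2 * l - 1)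
    (hF : ∀ A : Finset α, A.card = 2 → F.Shatters A) :
    n < (2 * l - 1).choose (l - 1) := by
  classical
  set β := {E // E ∈ F}
  have hm : Fintype.card β = 2 * l - 1 := by
    simpa [β, Fintype.card_coe] using hFcard
  set t : α → Finset β := fun x => Finset.univ.filter (fun E => x ∈ E.1) with ht
  have hmem : ∀ (x : α) (E : β), E ∈ t x ↔ x ∈ E.1 := by
    intro x E; simp [ht]
  -- witnesses from shattering
  have key : ∀ x y : α, x ≠ y →
      (t x ∩ t y).Nonempty ∧ (t x \ t y).Nonempty ∧ (t y \ t x).Nonempty ∧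
      ((t x ∪ t y)ᶜ).Nonempty := by
    intro x y hxy
    have hs : ({x, y} : Finset α).card = 2 := by
      rw [Finset.card_insert_of_notMem (by simp [hxy]), Finset.card_singleton]
    have hsh := hF {x, y} hs
    have get : ∀ s : Finset α, s ⊆ {x, y} →
        ∃ E : β, ({x, y} : Finset α) ∩ E.1 = s := by
      intro s hsub
      obtain ⟨u, hu, huu⟩ := hsh hsub
      exact ⟨⟨u, hu⟩, huu⟩
    refine ⟨?_, ?_, ?_, ?_⟩
    · obtain ⟨E, hE⟩ := get {x, y} le_rfl
      refine ⟨E, ?_⟩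
      rw [Finset.mem_inter, hmem, hmem]
      constructor
      · have : x ∈ ({x, y} : Finset α) ∩ E.1 := by rw [hE]; simp
        exact (Finset.mem_inter.1 this).2
      · have : y ∈ ({x, y} : Finset α) ∩ E.1 := by rw [hE]; simp
        exact (Finset.mem_inter.1 this).2
    · obtain ⟨E, hE⟩ := get {x} (by simp)
      refine ⟨E, ?_⟩
      rw [Finset.mem_sdiff, hmem, hmem]
      constructor
      · have : x ∈ ({x, y} : Finset α) ∩ E.1 := by rw [hE]; simp
        exact (Finset.mem_inter.1 this).2
      · intro hy
        have : y ∈ ({x, y} : Finset α) ∩ E.1 := by simp [hy]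
        rw [hE] at this
        exact hxy.symm (Finset.mem_singleton.1 this)
    · obtain ⟨E, hE⟩ := get {y} (by simp)
      refine ⟨E, ?_⟩
      rw [Finset.mem_sdiff, hmem, hmem]
      constructor
      · have : y ∈ ({x, y} : Finset α) ∩ E.1 := by rw [hE]; simp
        exact (Finset.mem_inter.1 this).2
      · intro hx
        have : x ∈ ({x, y} : Finset α) ∩ E.1 := by simp [hx]
        rw [hE] at this
        exact hxy (Finset.mem_singleton.1 this)
    · obtain ⟨E, hE⟩ := get ∅ (by simp)
      refine ⟨E, ?_⟩
      rw [Finset.mem_compl, Finset.mem_union, hmem, hmem]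
      rintro (hx | hy)
      · have : x ∈ ({x, y} : Finset α) ∩ E.1 := by simp [hx]
        rw [hE] at this; simp at this
      · have : y ∈ ({x, y} : Finset α) ∩ E.1 := by simp [hy]
        rw [hE] at this; simp at this
  -- also need witnesses for a single x
  have exy : ∀ x : α, ∃ y : α, x ≠ y := by
    intro x
    have : 1 < Fintype.card α := by omega
    obtain ⟨y, hy⟩ := Fintype.exists_ne_of_one_lt_card this x
    exact ⟨y, hy.symm⟩
  have tne : ∀ x : α, (t x).Nonempty := by
    intro x
    obtain ⟨y, hxy⟩ := exy x
    obtain ⟨E, hE⟩ := (key x y hxy).2.1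
    exact ⟨E, (Finset.mem_sdiff.1 hE).1⟩
  have tnu : ∀ x : α, (t x)ᶜ.Nonempty := by
    intro x
    obtain ⟨y, hxy⟩ := exy x
    obtain ⟨E, hE⟩ := (key x y hxy).2.2.2
    refine ⟨E, ?_⟩
    rw [Finset.mem_compl] at hE ⊢
    exact fun h => hE (Finset.mem_union_left _ h)
  set 𝒜 : Finset (Finset β) :=
    (Finset.univ.image t) ∪ (Finset.univ.image fun x => (t x)ᶜ) with h𝒜
  have hanti : IsAntichain (· ⊆ ·) (𝒜 : Set (Finset β)) := by
    rintro a ha b hb hab hsub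
    simp only [h𝒜, Finset.coe_union, Finset.coe_image, Finset.coe_univ, Set.image_univ,
      Set.mem_union, Set.mem_range] at ha hb
    obtain ⟨x, rfl⟩ | ⟨x, rfl⟩ := ha <;> obtain ⟨y, rfl⟩ | ⟨y, rfl⟩ := hb
    · rcases eq_or_ne x y with rfl | hxy
      · exact hab rfl
      · obtain ⟨E, hE⟩ := (key x y hxy).2.1
        rw [Finset.mem_sdiff] at hE
        exact hE.2 (hsub hE.1)
    · rcases eq_or_ne x y with rfl | hxy
      · obtain ⟨E, hE⟩ := tne x
        exact Finset.mem_compl.1 (hsub hE) hE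
      · obtain ⟨E, hE⟩ := (key x y hxy).1
        rw [Finset.mem_inter] at hE
        exact Finset.mem_compl.1 (hsub hE.1) hE.2
    · rcases eq_or_ne x y with rfl | hxy
      · obtain ⟨E, hE⟩ := tnu x
        exact Finset.mem_compl.1 hE (hsub hE)
      · obtain ⟨E, hE⟩ := (key x y hxy).2.2.2
        rw [Finset.mem_compl, Finset.mem_union] at hE
        have : E ∈ (t x)ᶜ := Finset.mem_compl.2 fun h => hE (Or.inl h)
        exact hE (Or.inr (hsub this))
    · rcases eq_or_ne x y with rfl | hxy
      · exact hab rfl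
      · obtain ⟨E, hE⟩ := (key x y hxy).2.2.1
        rw [Finset.mem_sdiff] at hE
        have : E ∈ (t x)ᶜ := Finset.mem_compl.2 hE.2
        exact Finset.mem_compl.1 (hsub this) hE.1
  have tinj : Function.Injective t := by
    intro x y hxy'
    by_contra hxy
    obtain ⟨E, hE⟩ := (key x y hxy).2.1
    rw [Finset.mem_sdiff, hxy'] at hE
    exact hE.2 hE.1
  have hdisj : Disjoint (Finset.univ.image t) (Finset.univ.image fun x => (t x)ᶜ) := by
    rw [Finset.disjoint_left]
    rintro a ha hb
    simp only [Finset.mem_image, Finset.mem_univ, true_and] at ha hb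
    obtain ⟨x, rfl⟩ := ha
    obtain ⟨y, hy⟩ := hb
    rcases eq_or_ne x y with rfl | hxy
    · obtain ⟨E, hE⟩ := tne x
      have hE' : E ∈ (t x)ᶜ := by rw [hy]; exact hE
      exact Finset.mem_compl.1 hE' hE
    · obtain ⟨E, hE⟩ := (key y x hxy.symm).1
      rw [Finset.mem_inter] at hE
      have : E ∈ (t y)ᶜ := by rw [hy]; exact hE.2
      exact Finset.mem_compl.1 this hE.1
  have hcard𝒜 : 𝒜.card = 2 * n := by
    rw [h𝒜, Finset.card_union_of_disjoint hdisj,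
      Finset.card_image_of_injective _ tinj,
      Finset.card_image_of_injective _ (fun x y h => tinj (by
        have := congrArg compl h; simpa using this)),
      Finset.card_univ, hcard]
    ring
  have hsp := IsAntichain.sperner hanti
  rw [hcard𝒜, hm] at hsp
  have hdiv : (2 * l - 1) / 2 = l - 1 := by omega
  rw [hdiv] at hsp
  omega
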